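/- Let λ ≠ 0, m ≠ 1 be real constants, set a = λ(m−1), and fix ε ∈ ℝ. If φ : ℝ × ℝ → ℝ is a positive differentiable solution of u_t + u^{m−1}·u_x + λ·u^m = 0 on ℝ², then the function ψ(x,t) = e^{−λ x}·(e^{a x} − ε)^{1/(m−1)}·φ((1/a)·ln(e^{a x} − ε), t) satisfies the same equation at every point (x,t) with e^{a x} > ε. -/

import Mathlib

open Real

/-- case k = m−1, a = λ(m−1). If φ is a positive differentiable
solution of `u_t + u^{m−1}·u_x + λ·u^m = 0` on ℝ², then
`ψ(x,t) = e^{−λx}·(e^{ax} − ε)^{1/(m−1)}·φ((1/a)·ln(e^{ax} − ε), t)`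
satisfies the same equation at every point with `e^{ax} > ε`. -/
theorem case2_G7_transformation
    (lam m : ℝ) (hlam : lam ≠ 0) (hm : m ≠ 1) (a : ℝ) (ha : a = lam * (m - 1))
    (ε : ℝ)
    (φ : ℝ × ℝ → ℝ)
    (hφ : Differentiable ℝ φ)
    (hpos : ∀ x t : ℝ, 0 < φ (x, t))
    (hsol : ∀ x t : ℝ,
      fderiv ℝ φ (x, t) (0, 1) + φ (x, t) ^ (m - 1) * fderiv ℝ φ (x, t) (1, 0)
        + lam * φ (x, t) ^ m = 0) :
    ∀ ψ : ℝ × ℝ → ℝ,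
      ψ = (fun p : ℝ × ℝ =>
        exp (-lam * p.1) * (exp (a * p.1) - ε) ^ (1 / (m - 1)) *
          φ ((1 / a) * Real.log (exp (a * p.1) - ε), p.2)) →
      ∀ x t : ℝ,
        ε < exp (a * x) →
        DifferentiableAt ℝ ψ (x, t) ∧
        fderiv ℝ ψ (x, t) (0, 1) + ψ (x, t) ^ (m - 1) * fderiv ℝ ψ (x, t) (1, 0)
          + lam * ψ (x, t) ^ m = 0 := by
  intro ψ hψdef x t hε
  subst hψdef
  set c := 1 / (m - 1) with hc
  have hm1 : m - 1 ≠ 0 := sub_ne_zero.mpr hm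
  have ha0 : a ≠ 0 := by rw [ha]; exact mul_ne_zero hlam hm1
  set Ex := exp (a * x) with hEx
  set ux := Ex - ε with hux
  have hu0 : 0 < ux := sub_pos.mpr hε
  set y := (1 / a) * Real.log ux with hy
  -- one-variable derivatives
  have hE : HasDerivAt (fun s : ℝ => exp (a * s)) (Ex * a) x := by
    simpa [mul_comm] using ((hasDerivAt_id x).const_mul a).exp
  have hu : HasDerivAt (fun s : ℝ => exp (a * s) - ε) (Ex * a) x := hE.sub_const ε
  have hY : HasDerivAt (fun s : ℝ => (1 / a) * Real.log (exp (a * s) - ε))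
      ((1 / a) * (Ex * a / ux)) x := (hu.log hu0.ne').const_mul (1 / a)
  have hUc : HasDerivAt (fun s : ℝ => (exp (a * s) - ε) ^ c)
      (Ex * a * c * ux ^ (c - 1)) x := hu.rpow_const (Or.inl hu0.ne')
  have hexp : HasDerivAt (fun s : ℝ => exp (-lam * s)) (exp (-lam * x) * (-lam)) x := by
    simpa [mul_comm] using ((hasDerivAt_id x).const_mul (-lam)).exp
  have hA : HasDerivAt (fun s : ℝ => exp (-lam * s) * (exp (a * s) - ε) ^ c)
      (exp (-lam * x) * (-lam) * ux ^ c
        + exp (-lam * x) * (Ex * a * c * ux ^ (c - 1))) x := hexp.mul hUc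
  set D := fderiv ℝ φ (y, t) with hD
  have hφd : HasFDerivAt φ D (y, t) := (hφ (y, t)).hasFDerivAt
  have hg : HasFDerivAt (fun p : ℝ × ℝ => ((1 / a) * Real.log (exp (a * p.1) - ε), p.2))
      (((ContinuousLinearMap.smulRight (1 : ℝ →L[ℝ] ℝ) ((1 / a) * (Ex * a / ux))).comp
          (ContinuousLinearMap.fst ℝ ℝ ℝ)).prod (ContinuousLinearMap.snd ℝ ℝ ℝ)) (x, t) :=
    (hY.hasFDerivAt.comp (f := Prod.fst) (x, t) hasFDerivAt_fst).prodMk hasFDerivAt_snd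
  have hcomp : HasFDerivAt (fun p : ℝ × ℝ => φ ((1 / a) * Real.log (exp (a * p.1) - ε), p.2))
      (D.comp (((ContinuousLinearMap.smulRight (1 : ℝ →L[ℝ] ℝ) ((1 / a) * (Ex * a / ux))).comp
          (ContinuousLinearMap.fst ℝ ℝ ℝ)).prod (ContinuousLinearMap.snd ℝ ℝ ℝ))) (x, t) :=
    hφd.comp (x, t) hg
  have hA1 : HasFDerivAt (fun p : ℝ × ℝ => exp (-lam * p.1) * (exp (a * p.1) - ε) ^ c)
      ((ContinuousLinearMap.smulRight (1 : ℝ →L[ℝ] ℝ)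
          (exp (-lam * x) * (-lam) * ux ^ c
            + exp (-lam * x) * (Ex * a * c * ux ^ (c - 1)))).comp
        (ContinuousLinearMap.fst ℝ ℝ ℝ)) (x, t) :=
    hA.hasFDerivAt.comp (f := Prod.fst) (x, t) hasFDerivAt_fst
  have hΨ := hA1.fun_mul hcomp
  refine ⟨hΨ.differentiableAt, ?_⟩
  rw [hΨ.fderiv]
  simp only [ContinuousLinearMap.add_apply, ContinuousLinearMap.smul_apply,
    ContinuousLinearMap.comp_apply, ContinuousLinearMap.smulRight_apply,
    ContinuousLinearMap.prod_apply, ContinuousLinearMap.coe_fst',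
    ContinuousLinearMap.coe_snd', ContinuousLinearMap.one_apply, smul_eq_mul,
    mul_zero, zero_mul, mul_one, one_mul, zero_add, add_zero]
  rw [← hEx, ← hux, ← hy]
  set P := φ (y, t) with hPdef
  have hP : 0 < P := hpos y t
  have hy1 : 1 / a * (Ex * a / ux) = Ex / ux := by field_simp
  rw [hy1]
  have hD10 : D (Ex / ux, 0) = Ex / ux * D (1, 0) := by
    have h2 : ((Ex / ux : ℝ), (0 : ℝ)) = (Ex / ux) • ((1 : ℝ), (0 : ℝ)) := by
      simp [Prod.smul_def]
    rw [h2, D.map_smul, smul_eq_mul]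
  rw [hD10]
  have hEx0 : (0 : ℝ) < Ex := by rw [hEx]; exact exp_pos _
  have hucpos : (0 : ℝ) < ux ^ c := Real.rpow_pos_of_pos hu0 c
  have hψpos : (0 : ℝ) < rexp (-lam * x) * ux ^ c * P := by positivity
  have hzm : ∀ z : ℝ, 0 < z → z ^ m = z ^ (m - 1) * z := by
    intro z hz
    rw [← Real.rpow_add_one hz.ne', sub_add_cancel]
  have hexppow : (rexp (-lam * x)) ^ (m - 1) = Ex⁻¹ := by
    rw [← Real.exp_mul, hEx, ← Real.exp_neg]
    congr 1
    rw [ha]; ring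
  have hucpow : (ux ^ c) ^ (m - 1) = ux := by
    rw [← Real.rpow_mul hu0.le, hc, one_div, inv_mul_cancel₀ hm1, Real.rpow_one]
  have hpow1 : (rexp (-lam * x) * ux ^ c * P) ^ (m - 1) = Ex⁻¹ * ux * P ^ (m - 1) := by
    rw [Real.mul_rpow (by positivity) hP.le, Real.mul_rpow (exp_pos _).le hucpos.le,
      hexppow, hucpow]
  have hac : Ex * a * c = lam * Ex := by
    rw [ha, hc]; field_simp
  have huc1 : ux ^ (c - 1) = ux ^ c / ux := by
    rw [Real.rpow_sub hu0, Real.rpow_one]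
  have hsy := hsol y t
  rw [hzm P hP] at hsy
  have hDt : D (0, 1) = -(P ^ (m - 1) * D (1, 0) + lam * (P ^ (m - 1) * P)) := by
    rw [← hPdef, ← hD] at hsy; linarith
  rw [hDt, hzm _ hψpos, hpow1, hac, huc1]
  field_simp
  ring
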